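/- Let 0 < q < 1, let k be a positive integer, let s > 0, and let A ∈ ℝ^{n×p}. Suppose the ⌈(s^q+1)k⌉-order restricted isometry constant of A satisfies δ_{(s^q+1)k} < 1/√(s^{q-2}+1). Then for every h ∈ ℝ^p with Ah = 0 and ‖h_{-max(k)}‖_q^q ≤ ‖h_{max(k)}‖_q^q, one has h = 0. -/

import Mathlib

open scoped BigOperators

/-- `‖v‖_q^q = ∑ |v i|^q` for `v ∈ ℝ^p`. -/
noncomputable def lqq (q : ℝ) {p : ℕ} (v : Fin p → ℝ) : ℝ := ∑ i, |v i| ^ q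

/-- The `ℓ_q` quasinorm `(∑ |v i|^q)^(1/q)`. -/
noncomputable def lqNorm (q : ℝ) {p : ℕ} (v : Fin p → ℝ) : ℝ := (∑ i, |v i| ^ q) ^ (1/q)

/-- Euclidean norm on `ℝ^p`. -/
noncomputable def l2Norm {p : ℕ} (v : Fin p → ℝ) : ℝ := Real.sqrt (∑ i, (v i) ^ 2)

/-- `ℓ_1` norm on `ℝ^p`. -/
noncomputable def l1Norm {p : ℕ} (v : Fin p → ℝ) : ℝ := ∑ i, |v i|

/-- `ℓ_∞` norm on `ℝ^p`. -/
noncomputable def linfNorm {p : ℕ} (v : Fin p → ℝ) : ℝ := ⨆ i, |v i|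

open Classical in
/-- `‖v‖_0`: number of nonzero entries of `v`. -/
noncomputable def l0 {p : ℕ} (v : Fin p → ℝ) : ℕ := (Finset.univ.filter (fun i => v i ≠ 0)).card

/-- `v` is `k`-sparse if it has at most `k` nonzero entries. -/
def Sparse {p : ℕ} (k : ℕ) (v : Fin p → ℝ) : Prop := l0 v ≤ k

/-- The `m`-order restricted isometry constant of `A`: the infimum of those `δ ≥ 0` such
that `(1-δ)‖x‖₂² ≤ ‖Ax‖₂² ≤ (1+δ)‖x‖₂²` for all `m`-sparse `x`. -/
noncomputable def ric {n p : ℕ} (A : Matrix (Fin n) (Fin p) ℝ) (m : ℕ) : ℝ :=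
  sInf {δ : ℝ | 0 ≤ δ ∧ ∀ x : Fin p → ℝ, Sparse m x →
    (1 - δ) * (∑ i, (x i) ^ 2) ≤ (∑ i, (A.mulVec x i) ^ 2) ∧
    (∑ i, (A.mulVec x i) ^ 2) ≤ (1 + δ) * (∑ i, (x i) ^ 2)}

/-- The spectral norm of `A`: the least `c ≥ 0` with `‖Av‖₂ ≤ c‖v‖₂` for all `v`. -/
noncomputable def specNorm {n p : ℕ} (A : Matrix (Fin n) (Fin p) ℝ) : ℝ :=
  sInf {c : ℝ | 0 ≤ c ∧ ∀ v : Fin p → ℝ, l2Norm (A.mulVec v) ≤ c * l2Norm v}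

/-- `vk` is a version of `v` with all but the `k` largest-magnitude entries set to zero. -/
def IsMaxK {p : ℕ} (k : ℕ) (v vk : Fin p → ℝ) : Prop :=
  ∃ T : Finset (Fin p), T.card = min k p ∧
    (∀ i ∈ T, ∀ j ∉ T, |v j| ≤ |v i|) ∧
    vk = fun i => if i ∈ T then v i else 0


/-- `Dec α r w`: `w` is a convex combination of `r`-sparse vectors with entries in `[0, α]`,
supported in `supp w`, with no larger total sum. -/
def Dec {p : ℕ} (α : ℝ) (r : ℕ) (w : Fin p → ℝ) : Prop :=
  ∃ (M : ℕ) (lam : Fin M → ℝ) (u : Fin M → Fin p → ℝ),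
    (∀ j, 0 ≤ lam j) ∧ (∑ j, lam j) = 1 ∧
    (∀ i, (∑ j, lam j * u j i) = w i) ∧
    (∀ j i, 0 ≤ u j i) ∧ (∀ j i, u j i ≤ α) ∧
    (∀ j i, w i = 0 → u j i = 0) ∧
    (∀ j, ((Finset.univ.filter (fun i => u j i ≠ 0))).card ≤ r) ∧
    (∀ j, (∑ i, u j i) ≤ ∑ i, w i)

lemma dec_combine {p : ℕ} {α t : ℝ} {r : ℕ} (ht0 : 0 ≤ t) (ht1 : t ≤ 1)
    {w w1 w2 : Fin p → ℝ}
    (hconv : ∀ i, t * w1 i + (1 - t) * w2 i = w i)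
    (hs1 : ∀ i, w i = 0 → w1 i = 0) (hs2 : ∀ i, w i = 0 → w2 i = 0)
    (hsum1 : ∑ i, w1 i = ∑ i, w i) (hsum2 : ∑ i, w2 i = ∑ i, w i)
    (H1 : Dec α r w1) (H2 : Dec α r w2) : Dec α r w := by
  obtain ⟨M1, lam1, u1, hl1nn, hl1sum, hu1rep, hu1nn, hu1α, hu1supp, hu1card, hu1sum⟩ := H1
  obtain ⟨M2, lam2, u2, hl2nn, hl2sum, hu2rep, hu2nn, hu2α, hu2supp, hu2card, hu2sum⟩ := H2
  refine ⟨M1 + M2, Fin.append (fun j => t * lam1 j) (fun j => (1 - t) * lam2 j),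
    Fin.append u1 u2, ?_, ?_, ?_, ?_, ?_, ?_, ?_, ?_⟩
  · intro j
    induction j using Fin.addCases with
    | left j' => ?_
    | right j' => ?_
    · rw [Fin.append_left]; exact mul_nonneg ht0 (hl1nn j')
    · rw [Fin.append_right]; exact mul_nonneg (by linarith) (hl2nn j')
  · rw [Fin.sum_univ_add]
    simp only [Fin.append_left, Fin.append_right]
    rw [← Finset.mul_sum, ← Finset.mul_sum, hl1sum, hl2sum]; ring
  · intro i
    rw [Fin.sum_univ_add]
    simp only [Fin.append_left, Fin.append_right]
    have e1 : ∑ j : Fin M1, t * lam1 j * u1 j i = t * w1 i := by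
      rw [← hu1rep i, Finset.mul_sum]
      exact Finset.sum_congr rfl (fun j _ => by ring)
    have e2 : ∑ j : Fin M2, (1 - t) * lam2 j * u2 j i = (1 - t) * w2 i := by
      rw [← hu2rep i, Finset.mul_sum]
      exact Finset.sum_congr rfl (fun j _ => by ring)
    rw [e1, e2, hconv i]
  · intro j i
    induction j using Fin.addCases with
    | left j' => ?_
    | right j' => ?_
    · rw [Fin.append_left]; exact hu1nn j' i
    · rw [Fin.append_right]; exact hu2nn j' i
  · intro j i
    induction j using Fin.addCases with
    | left j' => ?_
    | right j' => ?_
    · rw [Fin.append_left]; exact hu1α j' i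
    · rw [Fin.append_right]; exact hu2α j' i
  · intro j i hi
    induction j using Fin.addCases with
    | left j' => ?_
    | right j' => ?_
    · rw [Fin.append_left]; exact hu1supp j' i (hs1 i hi)
    · rw [Fin.append_right]; exact hu2supp j' i (hs2 i hi)
  · intro j
    induction j using Fin.addCases with
    | left j' => ?_
    | right j' => ?_
    · rw [Fin.append_left]; exact hu1card j'
    · rw [Fin.append_right]; exact hu2card j'
  · intro j
    induction j using Fin.addCases with
    | left j' => ?_
    | right j' => ?_
    · rw [Fin.append_left]; rw [← hsum1]; exact hu1sum j'
    · rw [Fin.append_right]; rw [← hsum2]; exact hu2sum j'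

lemma dec_base {p : ℕ} {α : ℝ} {r : ℕ} {w : Fin p → ℝ}
    (hw0 : ∀ i, 0 ≤ w i) (hwα : ∀ i, w i ≤ α)
    (hsupp : (Finset.univ.filter (fun i => w i ≠ 0)).card ≤ r) : Dec α r w :=
  ⟨1, fun _ => 1, fun _ => w, fun _ => zero_le_one, by simp, fun i => by simp,
    fun _ i => hw0 i, fun _ i => hwα i, fun _ i hi => hi, fun _ => hsupp, fun _ => le_rfl⟩

lemma dec_small {p : ℕ} {α : ℝ} (hα : 0 < α) {r : ℕ} {w : Fin p → ℝ}
    (hw0 : ∀ i, 0 ≤ w i) (hwα : ∀ i, w i ≤ α) (hsum : (∑ i, w i) ≤ (r : ℝ) * α)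
    (hP : (Finset.univ.filter (fun i => 0 < w i ∧ w i < α)).card ≤ 1) :
    ((Finset.univ.filter (fun i => w i ≠ 0)).card ≤ r) := by
  classical
  set Pset := Finset.univ.filter (fun i => 0 < w i ∧ w i < α) with hPdef
  set Aset := Finset.univ.filter (fun i => w i = α) with hAdef
  have hPA : Disjoint Pset Aset := by
    rw [Finset.disjoint_left]
    intro i hi hi'
    simp [hPdef] at hi; simp [hAdef] at hi'
    exact absurd hi' (ne_of_lt hi.2)
  have hsub : (Finset.univ.filter (fun i => w i ≠ 0)) ⊆ Pset ∪ Aset := by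
    intro i hi
    simp only [Finset.mem_filter, Finset.mem_univ, true_and] at hi
    have h0 : 0 < w i := lt_of_le_of_ne (hw0 i) (Ne.symm hi)
    rcases lt_or_eq_of_le (hwα i) with h | h
    · exact Finset.mem_union_left _ (by simp [hPdef, h0, h])
    · exact Finset.mem_union_right _ (by simp [hAdef, h])
  have hsumA : (Aset.card : ℝ) * α + ∑ i ∈ Pset, w i ≤ ∑ i, w i := by
    have h1 : ∑ i ∈ Pset ∪ Aset, w i ≤ ∑ i, w i :=
      Finset.sum_le_sum_of_subset_of_nonneg (Finset.subset_univ _) (fun i _ _ => hw0 i)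
    rw [Finset.sum_union hPA] at h1
    have hA : ∑ i ∈ Aset, w i = (Aset.card : ℝ) * α := by
      rw [Finset.sum_congr rfl (fun i hi => by simp [hAdef] at hi; exact hi)]
      simp [mul_comm]
    linarith
  have hcard := Finset.card_union_le Pset Aset
  have hc := Nat.le_one_iff_eq_zero_or_eq_one.mp hP
  rcases hc with hc | hc
  · have hPe : Pset = ∅ := Finset.card_eq_zero.mp hc
    have h2 : (Aset.card : ℝ) * α ≤ (r:ℝ) * α := by
      rw [hPe] at hsumA; simp at hsumA; linarith
    have hAr : Aset.card ≤ r := by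
      have := le_of_mul_le_mul_right h2 hα
      exact_mod_cast this
    calc (Finset.univ.filter (fun i => w i ≠ 0)).card ≤ (Pset ∪ Aset).card :=
          Finset.card_le_card hsub
      _ ≤ Pset.card + Aset.card := hcard
      _ ≤ r := by omega
  · obtain ⟨x, hx⟩ := Finset.card_eq_one.mp hc
    have hxP : x ∈ Pset := by rw [hx]; exact Finset.mem_singleton_self x
    have hxpos : 0 < w x := by
      rw [hPdef] at hxP
      simp only [Finset.mem_filter] at hxP; exact hxP.2.1
    have hsumP : ∑ i ∈ Pset, w i = w x := by rw [hx]; simp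
    have h2 : (Aset.card : ℝ) * α < (r:ℝ) * α := by rw [hsumP] at hsumA; linarith
    have hAr : Aset.card < r := by
      have := lt_of_mul_lt_mul_right h2 hα.le
      exact_mod_cast this
    calc (Finset.univ.filter (fun i => w i ≠ 0)).card ≤ (Pset ∪ Aset).card :=
          Finset.card_le_card hsub
      _ ≤ Pset.card + Aset.card := hcard
      _ ≤ r := by omega

lemma dec_main {p : ℕ} {α : ℝ} (hα : 0 < α) (r : ℕ) :
    ∀ N (w : Fin p → ℝ),
      (Finset.univ.filter (fun i => 0 < w i ∧ w i < α)).card ≤ N →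
      (∀ i, 0 ≤ w i) → (∀ i, w i ≤ α) → (∑ i, w i) ≤ (r : ℝ) * α →
      Dec α r w := by
  classical
  intro N
  induction N with
  | zero =>
    intro w hcard hw0 hwα hsum
    exact dec_base hw0 hwα (dec_small hα hw0 hwα hsum (le_trans hcard (by norm_num)))
  | succ N ih =>
    intro w hcard hw0 hwα hsum
    by_cases hsupp : ((Finset.univ.filter (fun i => w i ≠ 0)).card ≤ r)
    · exact dec_base hw0 hwα hsupp
    · set Pset := Finset.univ.filter (fun i => 0 < w i ∧ w i < α) with hPdef
      have hP2 : 1 < Pset.card := by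
        by_contra hle
        exact hsupp (dec_small hα hw0 hwα hsum (not_lt.mp hle))
      obtain ⟨a, ha, b, hb, hab⟩ := Finset.one_lt_card.mp hP2
      simp only [hPdef, Finset.mem_filter, Finset.mem_univ, true_and] at ha hb
      set t1 := min (w a) (α - w b) with ht1def
      set t2 := min (w b) (α - w a) with ht2def
      have ht1 : 0 < t1 := lt_min ha.1 (by linarith [hb.2])
      have ht2 : 0 < t2 := lt_min hb.1 (by linarith [ha.2])
      have ht1a : t1 ≤ w a := min_le_left _ _
      have ht1b : t1 ≤ α - w b := min_le_right _ _
      have ht2b : t2 ≤ w b := min_le_left _ _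
      have ht2a : t2 ≤ α - w a := min_le_right _ _
      set D : Fin p → ℝ := fun i => (if i = b then (1:ℝ) else 0) - (if i = a then (1:ℝ) else 0)
        with hD
      set w1 : Fin p → ℝ := fun i => w i + t1 * D i with hw1
      set w2 : Fin p → ℝ := fun i => w i - t2 * D i with hw2
      have hDa : D a = -1 := by simp [hD, hab]
      have hDb : D b = 1 := by simp [hD, Ne.symm hab]
      have hDother : ∀ i, i ≠ a → i ≠ b → D i = 0 := by
        intro i hia hib; simp [hD, hia, hib]
      have hw1a : w1 a = w a - t1 := by simp only [hw1, hDa]; ring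
      have hw1b : w1 b = w b + t1 := by simp only [hw1, hDb]; ring
      have hw2a : w2 a = w a + t2 := by simp only [hw2, hDa]; ring
      have hw2b : w2 b = w b - t2 := by simp only [hw2, hDb]; ring
      have hw1o : ∀ i, i ≠ a → i ≠ b → w1 i = w i := by
        intro i hia hib; simp [hw1, hDother i hia hib]
      have hw2o : ∀ i, i ≠ a → i ≠ b → w2 i = w i := by
        intro i hia hib; simp [hw2, hDother i hia hib]
      have hsumD : ∑ i, D i = 0 := by
        simp only [hD, Finset.sum_sub_distrib]
        rw [Finset.sum_ite_eq' Finset.univ b (fun _ => (1:ℝ)),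
            Finset.sum_ite_eq' Finset.univ a (fun _ => (1:ℝ))]
        simp
      have bounds : ∀ (v : Fin p → ℝ), v a = w a - t1 ∨ v a = w a + t2 → True → True →
          True := fun _ _ _ _ => trivial
      have hw10 : ∀ i, 0 ≤ w1 i := by
        intro i
        rcases eq_or_ne i a with rfl | hia
        · rw [hw1a]; linarith
        · rcases eq_or_ne i b with rfl | hib
          · rw [hw1b]; linarith [hb.1]
          · rw [hw1o i hia hib]; exact hw0 i
      have hw1α : ∀ i, w1 i ≤ α := by
        intro i
        rcases eq_or_ne i a with rfl | hia
        · rw [hw1a]; linarith [ha.2]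
        · rcases eq_or_ne i b with rfl | hib
          · rw [hw1b]; linarith
          · rw [hw1o i hia hib]; exact hwα i
      have hw20 : ∀ i, 0 ≤ w2 i := by
        intro i
        rcases eq_or_ne i a with rfl | hia
        · rw [hw2a]; linarith [ha.1]
        · rcases eq_or_ne i b with rfl | hib
          · rw [hw2b]; linarith
          · rw [hw2o i hia hib]; exact hw0 i
      have hw2α : ∀ i, w2 i ≤ α := by
        intro i
        rcases eq_or_ne i a with rfl | hia
        · rw [hw2a]; linarith
        · rcases eq_or_ne i b with rfl | hib
          · rw [hw2b]; linarith [hb.2]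
          · rw [hw2o i hia hib]; exact hwα i
      have hsum1 : ∑ i, w1 i = ∑ i, w i := by
        simp only [hw1]; rw [Finset.sum_add_distrib, ← Finset.mul_sum, hsumD]; ring
      have hsum2 : ∑ i, w2 i = ∑ i, w i := by
        simp only [hw2]; rw [Finset.sum_sub_distrib, ← Finset.mul_sum, hsumD]; ring
      have hsupp1 : ∀ i, w i = 0 → w1 i = 0 := by
        intro i hi
        rcases eq_or_ne i a with rfl | hia
        · exact absurd hi (ne_of_gt ha.1)
        · rcases eq_or_ne i b with rfl | hib
          · exact absurd hi (ne_of_gt hb.1)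
          · rw [hw1o i hia hib]; exact hi
      have hsupp2 : ∀ i, w i = 0 → w2 i = 0 := by
        intro i hi
        rcases eq_or_ne i a with rfl | hia
        · exact absurd hi (ne_of_gt ha.1)
        · rcases eq_or_ne i b with rfl | hib
          · exact absurd hi (ne_of_gt hb.1)
          · rw [hw2o i hia hib]; exact hi
      have habP : ({a, b} : Finset (Fin p)) ⊆ Pset := by
        intro i hi
        simp only [Finset.mem_insert, Finset.mem_singleton] at hi
        rcases hi with rfl | rfl
        · simp [hPdef, ha.1, ha.2]
        · simp [hPdef, hb.1, hb.2]
      have hPsub : ∀ (v : Fin p → ℝ), (∀ i, i ≠ a → i ≠ b → v i = w i) →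
          (Finset.univ.filter (fun i => 0 < v i ∧ v i < α)) ⊆ Pset := by
        intro v hv i hi
        simp only [Finset.mem_filter, Finset.mem_univ, true_and] at hi
        rcases eq_or_ne i a with rfl | hia
        · exact habP (by simp)
        · rcases eq_or_ne i b with rfl | hib
          · exact habP (by simp)
          · rw [hv i hia hib] at hi
            simp [hPdef, hi.1, hi.2]
      have hcard1 : (Finset.univ.filter (fun i => 0 < w1 i ∧ w1 i < α)).card ≤ N := by
        have hss : (Finset.univ.filter (fun i => 0 < w1 i ∧ w1 i < α)) ⊂ Pset := by
          rw [Finset.ssubset_iff_of_subset (hPsub w1 hw1o)]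
          rcases le_or_gt (w a) (α - w b) with hc | hc
          · refine ⟨a, habP (by simp), ?_⟩
            simp only [Finset.mem_filter, Finset.mem_univ, true_and, not_and]
            intro h0
            exfalso
            have : w1 a = 0 := by rw [hw1a, ht1def, min_eq_left hc]; ring
            rw [this] at h0; exact lt_irrefl _ h0
          · refine ⟨b, habP (by simp), ?_⟩
            simp only [Finset.mem_filter, Finset.mem_univ, true_and, not_and]
            intro h0
            have : w1 b = α := by rw [hw1b, ht1def, min_eq_right hc.le]; ring
            rw [this]; exact lt_irrefl _
        have := Finset.card_lt_card hss
        omega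
      have hcard2 : (Finset.univ.filter (fun i => 0 < w2 i ∧ w2 i < α)).card ≤ N := by
        have hss : (Finset.univ.filter (fun i => 0 < w2 i ∧ w2 i < α)) ⊂ Pset := by
          rw [Finset.ssubset_iff_of_subset (hPsub w2 hw2o)]
          rcases le_or_gt (w b) (α - w a) with hc | hc
          · refine ⟨b, habP (by simp), ?_⟩
            simp only [Finset.mem_filter, Finset.mem_univ, true_and, not_and]
            intro h0
            exfalso
            have : w2 b = 0 := by rw [hw2b, ht2def, min_eq_left hc]; ring
            rw [this] at h0; exact lt_irrefl _ h0
          · refine ⟨a, habP (by simp), ?_⟩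
            simp only [Finset.mem_filter, Finset.mem_univ, true_and, not_and]
            intro h0
            have : w2 a = α := by rw [hw2a, ht2def, min_eq_right hc.le]; ring
            rw [this]; exact lt_irrefl _
        have := Finset.card_lt_card hss
        omega
      have H1 := ih w1 hcard1 hw10 hw1α (by rw [hsum1]; exact hsum)
      have H2 := ih w2 hcard2 hw20 hw2α (by rw [hsum2]; exact hsum)
      have htpos : 0 < t1 + t2 := by linarith
      refine dec_combine (t := t2 / (t1 + t2)) (div_nonneg ht2.le htpos.le)
        (by rw [div_le_one htpos]; linarith) ?_ hsupp1 hsupp2 hsum1 hsum2 H1 H2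
      intro i
      have hkey : (t2 / (t1 + t2)) * t1 - (1 - t2 / (t1 + t2)) * t2 = 0 := by
        field_simp
        ring
      have : (t2 / (t1 + t2)) * w1 i + (1 - t2 / (t1 + t2)) * w2 i
          = w i + ((t2 / (t1 + t2)) * t1 - (1 - t2 / (t1 + t2)) * t2) * D i := by
        simp only [hw1, hw2]; ring
      rw [this, hkey]; ring

lemma ric_mem {n p : ℕ} (A : Matrix (Fin n) (Fin p) ℝ) (m : ℕ) :
    0 ≤ ric A m ∧ ∀ x : Fin p → ℝ, Sparse m x →
      (1 - ric A m) * (∑ i, (x i) ^ 2) ≤ (∑ i, (A.mulVec x i) ^ 2) ∧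
      (∑ i, (A.mulVec x i) ^ 2) ≤ (1 + ric A m) * (∑ i, (x i) ^ 2) := by
  classical
  set Dset := {δ : ℝ | 0 ≤ δ ∧ ∀ x : Fin p → ℝ, Sparse m x →
    (1 - δ) * (∑ i, (x i) ^ 2) ≤ (∑ i, (A.mulVec x i) ^ 2) ∧
    (∑ i, (A.mulVec x i) ^ 2) ≤ (1 + δ) * (∑ i, (x i) ^ 2)} with hD
  have hne : Dset.Nonempty := by
    refine ⟨1 + ∑ i, ∑ j, A i j ^ 2, ?_, ?_⟩
    · positivity
    · intro x _
      have hxnn : (0:ℝ) ≤ ∑ i, x i ^ 2 := by positivity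
      have hbound : (∑ i, (A.mulVec x i) ^ 2) ≤ (∑ i, ∑ j, A i j ^ 2) * (∑ i, x i ^ 2) := by
        rw [Finset.sum_mul]
        apply Finset.sum_le_sum
        intro i _
        have : A.mulVec x i = ∑ j, A i j * x j := rfl
        rw [this]
        exact Finset.sum_mul_sq_le_sq_mul_sq Finset.univ _ _
      have hF : (0:ℝ) ≤ ∑ i, ∑ j, A i j ^ 2 := by positivity
      have hA : (0:ℝ) ≤ ∑ i, (A.mulVec x i)^2 := by positivity
      constructor
      · nlinarith [mul_nonneg hF hxnn]
      · nlinarith [hbound, mul_nonneg hF hxnn]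
  have hbdd : BddBelow Dset := ⟨0, fun δ hδ => hδ.1⟩
  have hclosed : IsClosed Dset := by
    have : Dset = {δ : ℝ | 0 ≤ δ} ∩
        ⋂ (x : Fin p → ℝ) (_ : Sparse m x),
          ({δ : ℝ | (1 - δ) * (∑ i, (x i) ^ 2) ≤ (∑ i, (A.mulVec x i) ^ 2)} ∩
           {δ : ℝ | (∑ i, (A.mulVec x i) ^ 2) ≤ (1 + δ) * (∑ i, (x i) ^ 2)}) := by
      ext δ
      simp only [hD, Set.mem_setOf_eq, Set.mem_inter_iff, Set.mem_iInter]
    rw [this]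
    apply IsClosed.inter
    · exact isClosed_le continuous_const continuous_id
    · apply isClosed_iInter; intro x; apply isClosed_iInter; intro _
      apply IsClosed.inter
      · exact isClosed_le (by continuity) continuous_const
      · exact isClosed_le continuous_const (by continuity)
  have hmem : ric A m ∈ Dset := hclosed.csInf_mem hne hbdd
  exact ⟨hmem.1, hmem.2⟩

lemma holder_sum {ι : Type*} (T : Finset ι) (f : ι → ℝ) (hf : ∀ i ∈ T, 0 ≤ f i)
    {q : ℝ} (hq0 : 0 < q) (hq2 : q < 2) (hT : T.Nonempty) :
    ∑ i ∈ T, f i ^ q ≤ (T.card : ℝ) ^ (1 - q/2) * (∑ i ∈ T, f i ^ 2) ^ (q/2) := by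
  have hc : (0:ℝ) < T.card := by exact_mod_cast Finset.card_pos.mpr hT
  have hp : (1:ℝ) ≤ 2/q := by rw [le_div_iff₀ hq0]; linarith
  have key0 := Real.arith_mean_le_rpow_mean T (fun _ => 1/(T.card:ℝ)) (fun i => f i ^ q)
    (fun i _ => by positivity) (by rw [Finset.sum_const, nsmul_eq_mul]; field_simp)
    (fun i hi => Real.rpow_nonneg (hf i hi) q) hp
  have key : ∑ i ∈ T, (1/(T.card:ℝ)) * f i ^ q
      ≤ (∑ i ∈ T, (1/(T.card:ℝ)) * (f i ^ q) ^ ((2:ℝ)/q)) ^ ((1:ℝ)/(2/q)) := key0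
  have h2q : (1:ℝ) / (2/q) = q/2 := by field_simp
  rw [h2q] at key
  have hz : ∀ i ∈ T, (f i ^ q) ^ ((2:ℝ)/q) = f i ^ 2 := by
    intro i hi
    rw [← Real.rpow_mul (hf i hi)]
    have hqq : q * (2/q) = ((2:ℕ):ℝ) := by field_simp; norm_num
    rw [hqq, Real.rpow_natCast]
  have key2 : ∑ i ∈ T, (1/(T.card:ℝ)) * f i ^ q
      ≤ ((1/(T.card:ℝ)) * ∑ i ∈ T, f i ^ 2) ^ (q/2) := by
    refine le_trans key ?_
    have he : ∑ i ∈ T, (1/(T.card:ℝ)) * (f i ^ q) ^ ((2:ℝ)/q)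
        = ∑ i ∈ T, (1/(T.card:ℝ)) * f i ^ 2 :=
      Finset.sum_congr rfl (fun i hi => by rw [hz i hi])
    rw [he, Finset.mul_sum]
  rw [← Finset.mul_sum] at key2
  clear key key0
  rename' key2 => key
  have hsq : (0:ℝ) ≤ ∑ i ∈ T, f i ^ 2 := Finset.sum_nonneg fun i hi => sq_nonneg _
  have hmul : ((1/(T.card:ℝ)) * ∑ i ∈ T, f i ^ 2) ^ (q/2)
      = (1/(T.card:ℝ)) ^ (q/2) * (∑ i ∈ T, f i ^ 2) ^ (q/2) :=
    Real.mul_rpow (by positivity) hsq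
  rw [hmul] at key
  have hfinal : (T.card:ℝ) * ((1/(T.card:ℝ)) ^ (q/2)) = (T.card:ℝ) ^ (1 - q/2) := by
    have h1 : ((1:ℝ)/(T.card:ℝ))^(q/2) = 1 / (T.card:ℝ)^(q/2) := by
      rw [Real.div_rpow zero_le_one hc.le, Real.one_rpow]
    have hcq : (0:ℝ) < (T.card:ℝ)^(q/2) := Real.rpow_pos_of_pos hc _
    rw [h1]
    rw [eq_comm, mul_one_div, eq_div_iff hcq.ne', ← Real.rpow_add hc]
    norm_num
  calc ∑ i ∈ T, f i ^ q = (T.card:ℝ) * ((1/(T.card:ℝ)) * ∑ i ∈ T, f i ^ q) := by field_simp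
    _ ≤ (T.card:ℝ) * ((1/(T.card:ℝ)) ^ (q/2) * (∑ i ∈ T, f i ^ 2) ^ (q/2)) := by
        apply mul_le_mul_of_nonneg_left key hc.le
    _ = (T.card : ℝ) ^ (1 - q/2) * (∑ i ∈ T, f i ^ 2) ^ (q/2) := by
        rw [← mul_assoc, hfinal]


lemma l0_le_card {p : ℕ} (v : Fin p → ℝ) (F : Finset (Fin p))
    (hv : ∀ i, v i ≠ 0 → i ∈ F) : l0 v ≤ F.card := by
  unfold l0
  apply Finset.card_le_card
  intro i hi
  exact hv i (Finset.mem_filter.mp hi).2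

lemma sum_expand1 {n : ℕ} (x y : Fin n → ℝ) (c : ℝ) :
    ∑ i, (x i + c * y i)^2
      = (∑ i, x i^2) + 2*c*(∑ i, x i * y i) + c^2*(∑ i, y i^2) := by
  rw [Finset.mul_sum, Finset.mul_sum, ← Finset.sum_add_distrib, ← Finset.sum_add_distrib]
  exact Finset.sum_congr rfl fun i _ => by ring

lemma sum_expand2 {n : ℕ} (x y : Fin n → ℝ) (b c : ℝ) :
    ∑ i, (c * y i - b * x i)^2
      = c^2*(∑ i, y i^2) - 2*(c*b)*(∑ i, x i * y i) + b^2*(∑ i, x i^2) := by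
  rw [Finset.mul_sum, Finset.mul_sum, Finset.mul_sum]
  rw [← Finset.sum_sub_distrib, ← Finset.sum_add_distrib]
  exact Finset.sum_congr rfl fun i _ => by ring
set_option maxHeartbeats 2000000 in
/-- **Null space property.** Under the RIC condition, any `h` in the null space of `A`
satisfying the cone condition `‖h_{-max(k)}‖_q^q ≤ ‖h_{max(k)}‖_q^q` must vanish. -/
theorem null_space_property {n p : ℕ} (q : ℝ) (hq0 : 0 < q) (hq1 : q < 1)
    (k : ℕ) (hk : 0 < k) (s : ℝ) (hs : 0 < s)
    (A : Matrix (Fin n) (Fin p) ℝ)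
    (hric : ric A ⌈(s ^ q + 1) * (k : ℝ)⌉₊ < 1 / Real.sqrt (s ^ (q - 2) + 1))
    (h hmaxk : Fin p → ℝ) (hmax : IsMaxK k h hmaxk)
    (hnull : A.mulVec h = 0)
    (hcone : lqq q (h - hmaxk) ≤ lqq q hmaxk) :
    h = 0 := by
  classical
  obtain ⟨T, hTcard, -, hmk⟩ := hmax
  have hq2 : q < 2 := by linarith
  have hrnn : ∀ x : ℝ, (0:ℝ) ≤ |x| ^ q := fun x => Real.rpow_nonneg (abs_nonneg x) q
  have habsq_zero : ∀ x : ℝ, |x| ^ q = 0 → x = 0 := by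
    intro x hx
    by_contra hne
    have hpos : (0:ℝ) < |x| := abs_pos.mpr hne
    exact absurd hx (ne_of_gt (Real.rpow_pos_of_pos hpos q))
  have hzq : |(0:ℝ)| ^ q = 0 := by
    rw [abs_zero]; exact Real.zero_rpow (ne_of_gt hq0)
  set W := ∑ i ∈ T, |h i| ^ q with hWdef
  have hmaxW : lqq q hmaxk = W := by
    have h0 : lqq q hmaxk = ∑ i : Fin p, |hmaxk i| ^ q := rfl
    rw [h0, hWdef]
    have hterm : ∀ i : Fin p, |hmaxk i| ^ q = if i ∈ T then |h i| ^ q else 0 := by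
      intro i; rw [hmk]; by_cases hi : i ∈ T <;> simp [hi, Real.zero_rpow hq0.ne']
    rw [Finset.sum_congr rfl (fun i _ => hterm i), Finset.sum_ite_mem, Finset.univ_inter]
  have hconeW : ∑ i ∈ Finset.univ.filter (fun i => i ∉ T), |h i| ^ q ≤ W := by
    have hrw : lqq q (h - hmaxk)
        = ∑ i ∈ Finset.univ.filter (fun i => i ∉ T), |h i| ^ q := by
      have h0 : lqq q (h - hmaxk) = ∑ i : Fin p, |(h - hmaxk) i| ^ q := rfl
      rw [h0]
      have hterm : ∀ i : Fin p, |(h - hmaxk) i| ^ q = if i ∉ T then |h i| ^ q else 0 := by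
        intro i
        rw [Pi.sub_apply, hmk]
        by_cases hi : i ∈ T <;> simp [hi, Real.zero_rpow hq0.ne']
      rw [Finset.sum_congr rfl (fun i _ => hterm i), Finset.sum_filter]
    rw [← hrw, ← hmaxW]; exact hcone
  by_cases hW : W ≤ 0
  · -- degenerate case : everything vanishes
    have hWz : ∀ i ∈ T, h i = 0 := by
      intro i hi
      have hle : |h i| ^ q ≤ 0 := by
        have hsin := Finset.single_le_sum (fun j (_ : j ∈ T) => hrnn (h j)) hi
        linarith
      exact habsq_zero _ (le_antisymm hle (hrnn _))
    have hWz' : ∀ i ∉ T, h i = 0 := by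
      intro i hi
      have hmem : i ∈ Finset.univ.filter (fun i => i ∉ T) := by simp [hi]
      have hle : |h i| ^ q ≤ 0 := by
        have hsin := Finset.single_le_sum
          (fun j (_ : j ∈ Finset.univ.filter (fun i => i ∉ T)) => hrnn (h j)) hmem
        linarith
      exact habsq_zero _ (le_antisymm hle (hrnn _))
    funext i
    by_cases hi : i ∈ T
    · exact hWz i hi
    · exact hWz' i hi
  push_neg at hW
  exfalso
  set m := ⌈(s ^ q + 1) * (k : ℝ)⌉₊ with hm
  have hkR : (0:ℝ) < (k:ℝ) := by exact_mod_cast hk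
  have hsq : (0:ℝ) < s ^ q := Real.rpow_pos_of_pos hs q
  have hαq0 : (0:ℝ) < W / (s ^ q * k) := div_pos hW (mul_pos hsq hkR)
  set α := (W / (s ^ q * (k:ℝ))) ^ (1/q) with hαdef
  have hα : 0 < α := Real.rpow_pos_of_pos hαq0 _
  have hαq : α ^ q = W / (s ^ q * (k:ℝ)) := by
    rw [hαdef, ← Real.rpow_mul hαq0.le, one_div_mul_cancel hq0.ne', Real.rpow_one]
  have hWα : W = s ^ q * (k:ℝ) * α ^ q := by
    rw [hαq]; field_simp
  set G := T ∪ Finset.univ.filter (fun i => i ∉ T ∧ α < |h i|) with hGdef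
  have hTG : T ⊆ G := Finset.subset_union_left
  have hGmem : ∀ i, i ∈ G ↔ (i ∈ T ∨ (i ∉ T ∧ α < |h i|)) := by
    intro i; simp [hGdef]
  have hGsd : ∀ i, i ∈ G \ T ↔ (i ∉ T ∧ α < |h i|) := by
    intro i
    rw [Finset.mem_sdiff, hGmem i]
    tauto
  set d := (G \ T).card with hd
  set E := ∑ i ∈ G \ T, |h i| ^ q with hE
  have hEd : (d:ℝ) * α ^ q ≤ E := by
    rw [hE]
    calc (d:ℝ) * α ^ q = ∑ _i ∈ G \ T, α ^ q := by
          rw [Finset.sum_const, nsmul_eq_mul, hd]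
      _ ≤ ∑ i ∈ G \ T, |h i| ^ q := by
          apply Finset.sum_le_sum
          intro i hi
          exact Real.rpow_le_rpow hα.le ((hGsd i).mp hi).2.le hq0.le
  set TailQ := ∑ i ∈ Finset.univ.filter (fun i => i ∉ G), |h i| ^ q with hTailQ
  have hET : E + TailQ ≤ W := by
    have hdisj : Disjoint (G \ T) (Finset.univ.filter (fun i => i ∉ G)) := by
      rw [Finset.disjoint_left]; intro i hi hi2
      simp only [Finset.mem_filter] at hi2
      exact hi2.2 ((Finset.mem_sdiff.mp hi).1)
    have hsub : (G \ T) ∪ Finset.univ.filter (fun i => i ∉ G)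
        ⊆ Finset.univ.filter (fun i => i ∉ T) := by
      intro i hi
      rcases Finset.mem_union.mp hi with hi | hi
      · simp [((hGsd i).mp hi).1]
      · simp only [Finset.mem_filter] at hi ⊢
        exact ⟨Finset.mem_univ i, fun hT' => hi.2 (hTG hT')⟩
    calc E + TailQ
        = ∑ i ∈ (G \ T) ∪ Finset.univ.filter (fun i => i ∉ G), |h i| ^ q :=
          (Finset.sum_union hdisj).symm
      _ ≤ ∑ i ∈ Finset.univ.filter (fun i => i ∉ T), |h i| ^ q :=
          Finset.sum_le_sum_of_subset_of_nonneg hsub (fun i _ _ => hrnn _)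
      _ ≤ W := hconeW
  have hTailQnn : 0 ≤ TailQ := Finset.sum_nonneg fun i _ => hrnn _
  have hEnn : 0 ≤ E := Finset.sum_nonneg fun i _ => hrnn _
  have hαqpos : 0 < α ^ q := Real.rpow_pos_of_pos hα q
  have hdk : (d:ℝ) ≤ s ^ q * (k:ℝ) := by
    have hEW : E ≤ W := by linarith only [hET, hTailQnn]
    have h1 : (d:ℝ) * α^q ≤ (s^q * (k:ℝ)) * α^q := by linarith only [hEd, hEW, hWα]
    exact le_of_mul_le_mul_right h1 hαqpos
  have hTk : T.card ≤ k := by rw [hTcard]; exact min_le_left _ _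
  have hTkR : ((T.card : ℕ):ℝ) ≤ (k:ℝ) := by exact_mod_cast hTk
  have hGcard : G.card ≤ T.card + d := by
    have h1 := Finset.card_sdiff_of_subset hTG
    have h2 := Finset.card_le_card hTG
    omega
  have hGcardR : ((G.card : ℕ):ℝ) ≤ (T.card:ℝ) + (d:ℝ) := by exact_mod_cast hGcard
  have hmlb : (s ^ q + 1) * (k:ℝ) ≤ (m:ℝ) := Nat.le_ceil _
  have hGm : G.card ≤ m := by
    have hGR : ((G.card : ℕ):ℝ) ≤ (m:ℝ) := by linarith only [hGcardR, hTkR, hmlb, hdk]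
    exact_mod_cast hGR
  set r := m - G.card with hr
  have hrR : (r:ℝ) = (m:ℝ) - (G.card:ℝ) := by
    rw [hr, Nat.cast_sub hGm]
  have hrge : s ^ q * (k:ℝ) - (d:ℝ) ≤ (r:ℝ) := by
    rw [hrR]; linarith only [hGcardR, hTkR, hmlb]
  -- the tail magnitude vector
  set w : Fin p → ℝ := fun i => if i ∈ G then 0 else |h i| with hwdef
  have hout : ∀ i, i ∉ G → i ∉ T ∧ |h i| ≤ α := by
    intro i hi
    by_cases hT' : i ∈ T
    · exact absurd (hTG hT') hi
    · refine ⟨hT', ?_⟩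
      by_contra hgt
      push_neg at hgt
      exact hi ((hGmem i).mpr (Or.inr ⟨hT', hgt⟩))
  have hw0 : ∀ i, 0 ≤ w i := by
    intro i
    by_cases hi : i ∈ G <;> simp [hwdef, hi, abs_nonneg]
  have hwα : ∀ i, w i ≤ α := by
    intro i
    by_cases hi : i ∈ G
    · simp [hwdef, hi, hα.le]
    · simp only [hwdef, if_neg hi]
      exact (hout i hi).2
  have hx_le : ∀ x : ℝ, 0 ≤ x → x ≤ α → x ≤ α ^ (1 - q) * x ^ q := by
    intro x hx0 hxα
    rcases eq_or_lt_of_le hx0 with hx | hx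
    · rw [← hx, Real.zero_rpow hq0.ne']
      simp
    · calc x = x ^ ((1-q) + q) := by rw [show (1-q)+q = (1:ℝ) by ring, Real.rpow_one]
        _ = x ^ (1-q) * x ^ q := Real.rpow_add hx _ _
        _ ≤ α ^ (1-q) * x ^ q := by
            apply mul_le_mul_of_nonneg_right
              (Real.rpow_le_rpow hx0 hxα (by linarith)) (Real.rpow_nonneg hx0 q)
  set Tail1 := ∑ i, w i with hTail1
  have hT1Q : Tail1 ≤ α ^ (1 - q) * TailQ := by
    have hsplit : Tail1 = ∑ i ∈ Finset.univ.filter (fun i => i ∉ G), |h i| := by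
      rw [hTail1, Finset.sum_filter]
      apply Finset.sum_congr rfl
      intro i _
      by_cases hi : i ∈ G <;> simp [hwdef, hi]
    rw [hsplit, hTailQ, Finset.mul_sum]
    apply Finset.sum_le_sum
    intro i hi
    simp only [Finset.mem_filter] at hi
    exact hx_le _ (abs_nonneg _) (hout i hi.2).2
  have hT1r : Tail1 ≤ (r:ℝ) * α := by
    have h1 : α ^ (1-q) * TailQ ≤ α ^ (1-q) * (W - E) :=
      mul_le_mul_of_nonneg_left (by linarith) (Real.rpow_nonneg hα.le _)
    have h2 : α ^ (1-q) * (W - E) ≤ α ^ (1-q) * ((s^q * (k:ℝ) - d) * α ^ q) := by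
      apply mul_le_mul_of_nonneg_left ?_ (Real.rpow_nonneg hα.le _)
      linarith only [hEd, hWα]
    have h3 : α ^ (1-q) * α ^ q = α := by
      rw [← Real.rpow_add hα]; norm_num
    have h4 : α ^ (1-q) * ((s^q * (k:ℝ) - d) * α ^ q) = (s^q * (k:ℝ) - d) * α := by
      rw [mul_comm (s^q * (k:ℝ) - (d:ℝ)) (α ^ q), ← mul_assoc, h3, mul_comm]
    have h5 : (s^q * (k:ℝ) - d) * α ≤ (r:ℝ) * α := mul_le_mul_of_nonneg_right hrge hα.le
    linarith only [hT1Q, h1, h2, h3, h4, h5]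
  -- decompose the tail
  obtain ⟨M, lam, u0, hlnn, hlsum, hurep, hunn, huα, husupp, hucard, husum⟩ :=
    dec_main hα r (Finset.univ.filter (fun i => 0 < w i ∧ w i < α)).card w
      le_rfl hw0 hwα (by rw [← hTail1]; exact hT1r)
  -- reattach signs
  set sgn : Fin p → ℝ := fun i => if h i < 0 then -1 else 1 with hsgn
  have hsgn_mul : ∀ i, sgn i * |h i| = h i := by
    intro i
    by_cases hneg : h i < 0
    · simp only [hsgn]; rw [if_pos hneg, abs_of_neg hneg]; ring
    · simp only [hsgn]; rw [if_neg hneg, abs_of_nonneg (not_lt.mp hneg)]; ring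
  have hsgn_sq : ∀ i (x : ℝ), (sgn i * x)^2 = x^2 := by
    intro i x
    by_cases hneg : h i < 0
    · simp only [hsgn]; rw [if_pos hneg]; ring
    · simp only [hsgn]; rw [if_neg hneg]; ring
  set u : Fin M → Fin p → ℝ := fun j i => sgn i * u0 j i with hu
  set g : Fin p → ℝ := fun i => if i ∈ G then h i else 0 with hg
  set tl : Fin p → ℝ := fun i => if i ∈ G then 0 else h i with htl
  have hgtl : ∀ i, g i + tl i = h i := by
    intro i
    by_cases hi : i ∈ G <;> simp [hg, htl, hi]
  have hurepl : ∀ i, ∑ j, lam j * u j i = tl i := by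
    intro i
    have e1 : ∑ j, lam j * u j i = sgn i * ∑ j, lam j * u0 j i := by
      rw [Finset.mul_sum]
      exact Finset.sum_congr rfl fun j _ => by simp only [hu]; ring
    rw [e1, hurep i]
    by_cases hi : i ∈ G
    · simp [hwdef, htl, hi]
    · simp only [hwdef, htl, if_neg hi]
      exact hsgn_mul i
  have huG : ∀ j i, i ∈ G → u j i = 0 := by
    intro j i hiG
    have hwi : w i = 0 := by simp [hwdef, hiG]
    simp only [hu, husupp j i hwi]; ring
  -- RIC facts
  obtain ⟨hδ0, hδrip⟩ := ric_mem A m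
  set δ := ric A m with hδ
  set c2 := s ^ (q - 2) with hc2
  have hc2pos : 0 < c2 := Real.rpow_pos_of_pos hs _
  set dd := Real.sqrt (c2 + 1) with hdd
  have hddsq : dd ^ 2 = c2 + 1 := Real.sq_sqrt (by linarith)
  have hdd1 : 1 ≤ dd := Real.one_le_sqrt.mpr (by linarith)
  have hδdd : δ * dd < 1 := by
    have hddpos : 0 < dd := by linarith
    have hmul := mul_lt_mul_of_pos_right hric hddpos
    rw [one_div, inv_mul_cancel₀ hddpos.ne'] at hmul
    exact hmul
  set μ := 1 / (1 + dd) with hμ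
  set ν := 1 - 2 * μ with hν
  have h1dd : 0 < 1 + dd := by linarith
  have hμpos : 0 < μ := by rw [hμ]; positivity
  have hμle : μ ≤ 1/2 := by
    rw [hμ, div_le_div_iff₀ h1dd (by norm_num)]
    linarith
  have hν0 : 0 ≤ ν := by rw [hν]; linarith only [hμle]
  have hν1 : ν < 1 := by rw [hν]; linarith only [hμpos]
  have hkey : 1 + ν^2 + 2*μ^2*c2 = dd * (1 - ν^2) := by
    have hc2e : c2 = dd^2 - 1 := by linarith
    rw [hc2e, hν, hμ]
    field_simp
    ring
  -- geometric quantities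
  set G2 := ∑ i ∈ G, h i ^ 2 with hG2
  have hgsum : ∑ i, g i ^ 2 = G2 := by
    rw [hG2]
    have hterm : ∀ i : Fin p, g i ^ 2 = if i ∈ G then h i ^ 2 else 0 := by
      intro i; by_cases hi : i ∈ G <;> simp [hg, hi]
    rw [Finset.sum_congr rfl (fun i _ => hterm i), Finset.sum_ite_mem, Finset.univ_inter]
  have hTne : T.Nonempty := by
    rcases Finset.eq_empty_or_nonempty T with hTe | hTe
    · exfalso
      have : W = 0 := by rw [hWdef, hTe, Finset.sum_empty]
      linarith
    · exact hTe
  have hTsq : s^2 * (k:ℝ) * α^2 ≤ ∑ i ∈ T, h i ^ 2 := by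
    have hH := holder_sum T (fun i => |h i|) (fun i _ => abs_nonneg _) hq0 hq2 hTne
    have habs2 : ∑ i ∈ T, |h i| ^ 2 = ∑ i ∈ T, h i ^ 2 :=
      Finset.sum_congr rfl fun i _ => sq_abs (h i)
    rw [habs2] at hH
    -- hH : W ≤ (T.card)^{1-q/2} * (Σ_T h²)^{q/2}
    set ST := ∑ i ∈ T, h i ^ 2 with hST
    have hSTnn : 0 ≤ ST := Finset.sum_nonneg fun i _ => sq_nonneg _
    have hCle : ((T.card:ℕ):ℝ) ^ (1 - q/2) ≤ (k:ℝ) ^ (1 - q/2) :=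
      Real.rpow_le_rpow (Nat.cast_nonneg _) hTkR (by linarith)
    have hWk : W ≤ (k:ℝ) ^ (1 - q/2) * ST ^ (q/2) := by
      calc W ≤ ((T.card:ℕ):ℝ) ^ (1 - q/2) * ST ^ (q/2) := hH
        _ ≤ (k:ℝ) ^ (1 - q/2) * ST ^ (q/2) :=
            mul_le_mul_of_nonneg_right hCle (Real.rpow_nonneg hSTnn _)
    by_contra hlt
    push_neg at hlt
    -- then ST^{q/2} < (s²kα²)^{q/2} = s^q k^{q/2} α^q and W = s^q k α^q gives contradiction
    have hXpos : 0 < s^2 * (k:ℝ) * α^2 := by positivity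
    have hstrict : ST ^ (q/2) < (s^2 * (k:ℝ) * α^2) ^ (q/2) :=
      Real.rpow_lt_rpow hSTnn hlt (by linarith)
    have hXval : (s^2 * (k:ℝ) * α^2) ^ (q/2) = s^q * (k:ℝ)^(q/2) * α^q := by
      rw [Real.mul_rpow (by positivity) (by positivity),
          Real.mul_rpow (by positivity) (by positivity)]
      congr 1
      · congr 1
        rw [show s^(2:ℕ) = s^((2:ℕ):ℝ) from (Real.rpow_natCast s 2).symm,
            ← Real.rpow_mul hs.le]
        congr 1
        push_cast
        ring
      · rw [show α^(2:ℕ) = α^((2:ℕ):ℝ) from (Real.rpow_natCast α 2).symm,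
            ← Real.rpow_mul hα.le]
        congr 1
        push_cast
        ring
    have hkpow : (k:ℝ) ^ (1 - q/2) * (k:ℝ) ^ (q/2) = (k:ℝ) := by
      rw [← Real.rpow_add hkR]; norm_num
    -- W ≤ k^{1-q/2} ST^{q/2} < k^{1-q/2} s^q k^{q/2} α^q = s^q k α^q = W
    have hk1 : (0:ℝ) < (k:ℝ) ^ (1 - q/2) := Real.rpow_pos_of_pos hkR _
    have hchain : W < (k:ℝ)^(1-q/2) * (s^q * (k:ℝ)^(q/2) * α^q) := by
      calc W ≤ (k:ℝ) ^ (1 - q/2) * ST ^ (q/2) := hWk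
        _ < (k:ℝ)^(1-q/2) * (s^2 * (k:ℝ) * α^2) ^ (q/2) :=
            mul_lt_mul_of_pos_left hstrict hk1
        _ = (k:ℝ)^(1-q/2) * (s^q * (k:ℝ)^(q/2) * α^q) := by rw [hXval]
    have hchain2 : (k:ℝ)^(1-q/2) * (s^q * (k:ℝ)^(q/2) * α^q) = s^q * (k:ℝ) * α^q := by
      calc (k:ℝ)^(1-q/2) * (s^q * (k:ℝ)^(q/2) * α^q)
          = s^q * ((k:ℝ)^(1-q/2) * (k:ℝ)^(q/2)) * α^q := by ring
        _ = s^q * (k:ℝ) * α^q := by rw [hkpow]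
    rw [hchain2] at hchain
    linarith only [hWα, hchain]
  have hGTsq : α ^ (2 - q) * E ≤ ∑ i ∈ G \ T, h i ^ 2 := by
    rw [hE, Finset.mul_sum]
    apply Finset.sum_le_sum
    intro i hi
    have hgt := ((hGsd i).mp hi).2
    have h0 : 0 < |h i| := lt_trans hα hgt
    calc α ^ (2-q) * |h i| ^ q ≤ |h i| ^ (2-q) * |h i| ^ q := by
          apply mul_le_mul_of_nonneg_right
            (Real.rpow_le_rpow hα.le hgt.le (by linarith)) (hrnn _)
      _ = |h i| ^ ((2-q) + q) := (Real.rpow_add h0 _ _).symm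
      _ = h i ^ 2 := by
          rw [show (2-q)+q = ((2:ℕ):ℝ) by push_cast; ring, Real.rpow_natCast, sq_abs]
  have hG2lb : s^2 * (k:ℝ) * α^2 + α^(2-q) * E ≤ G2 := by
    rw [hG2, ← Finset.sum_sdiff hTG]
    linarith only [hTsq, hGTsq]
  have hαEnn : 0 ≤ α^(2-q) * E := mul_nonneg (Real.rpow_nonneg hα.le _) hEnn
  have hG2pos : 0 < G2 := by linarith only [hG2lb, hαEnn, mul_pos (mul_pos (by positivity : (0:ℝ) < s^2) hkR) (by positivity : (0:ℝ) < α^2)]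
  -- the weighted ℓ2 mass of the decomposition
  set S := ∑ j, lam j * (∑ i, u j i ^ 2) with hSdef
  have hu2 : ∀ j, (∑ i, u j i ^2) ≤ α * Tail1 := by
    intro j
    have e2 : ∑ i, u j i ^2 = ∑ i, u0 j i ^2 :=
      Finset.sum_congr rfl fun i _ => by simp only [hu]; exact hsgn_sq i _
    rw [e2]
    have e3 : ∑ i, u0 j i ^2 ≤ ∑ i, α * u0 j i := by
      apply Finset.sum_le_sum
      intro i _
      have hmm := mul_le_mul_of_nonneg_right (huα j i) (hunn j i)
      have hp2 : u0 j i ^ 2 = u0 j i * u0 j i := sq (u0 j i) ▸ rfl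
      linarith only [hmm, hp2]
    have e4 : ∑ i, α * u0 j i = α * ∑ i, u0 j i := by rw [Finset.mul_sum]
    have e5 : α * ∑ i, u0 j i ≤ α * Tail1 := by
      apply mul_le_mul_of_nonneg_left _ hα.le
      rw [hTail1]; exact husum j
    linarith
  have hSle : S ≤ α * Tail1 := by
    rw [hSdef]
    calc ∑ j, lam j * (∑ i, u j i^2) ≤ ∑ j, lam j * (α * Tail1) :=
          Finset.sum_le_sum (fun j _ => mul_le_mul_of_nonneg_left (hu2 j) (hlnn j))
      _ = α * Tail1 := by rw [← Finset.sum_mul, hlsum, one_mul]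
  have hSnn : 0 ≤ S := Finset.sum_nonneg fun j _ =>
    mul_nonneg (hlnn j) (Finset.sum_nonneg fun i _ => sq_nonneg _)
  have hmulα : α * α ^ (1-q) = α ^ (2-q) := by
    have e := Real.rpow_add hα 1 (1-q)
    rw [Real.rpow_one] at e
    rw [← e]
    congr 1
    ring
  have hαpow2 : α^(2-q) * α^q = α^2 := by
    rw [← Real.rpow_add hα]
    rw [show (2-q)+q = ((2:ℕ):ℝ) by push_cast; ring, Real.rpow_natCast]
  have hSc2 : S ≤ c2 * G2 := by
    have k1 : α * Tail1 ≤ α * (α^(1-q) * (W - E)) := by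
      apply mul_le_mul_of_nonneg_left _ hα.le
      calc Tail1 ≤ α ^ (1-q) * TailQ := hT1Q
        _ ≤ α^(1-q) * (W - E) :=
            mul_le_mul_of_nonneg_left (by linarith) (Real.rpow_nonneg hα.le _)
    have k2 : α * (α^(1-q) * (W-E)) = α^(2-q) * (W-E) := by
      rw [← mul_assoc, hmulα]
    have k3 : α^(2-q) * (W - E) = s^q * (k:ℝ) * α^2 - α^(2-q) * E := by
      rw [hWα]
      linear_combination (s^q * (k:ℝ)) * hαpow2
    have k5 : c2 * s^2 = s^q := by
      rw [hc2, show s^(2:ℕ) = s^((2:ℕ):ℝ) from (Real.rpow_natCast s 2).symm,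
        ← Real.rpow_add hs]
      norm_num
    have k5' : c2 * (s^2 * (k:ℝ) * α^2) = s^q * (k:ℝ) * α^2 := by
      rw [show c2 * (s^2 * (k:ℝ) * α^2) = (c2 * s^2) * ((k:ℝ) * α^2) by ring, k5]; ring
    have k4 : c2 * (s^2 * (k:ℝ) * α^2 + α^(2-q)*E) ≤ c2 * G2 :=
      mul_le_mul_of_nonneg_left hG2lb hc2pos.le
    linarith only [hSle, k1, k2, k3, k4, k5', hαEnn, mul_nonneg hc2pos.le hαEnn]
  -- sparsity of the test vectors
  have hm_split : G.card + r = m := Nat.add_sub_cancel' hGm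
  have husupport : ∀ j i, u j i ≠ 0 → u0 j i ≠ 0 := by
    intro j i hne h0
    apply hne
    simp only [hu, h0]; ring
  have hsparse : ∀ (j : Fin M) (a c : ℝ), Sparse m (fun i => a * g i + c * u j i) := by
    intro j a c
    have hsub : ∀ i, (a * g i + c * u j i) ≠ 0 →
        i ∈ G ∪ (Finset.univ.filter (fun i => u0 j i ≠ 0)) := by
      intro i hi
      by_cases hiG : i ∈ G
      · exact Finset.mem_union_left _ hiG
      · apply Finset.mem_union_right
        simp only [Finset.mem_filter, Finset.mem_univ, true_and]
        intro h0
        apply hi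
        have hgz : g i = 0 := by simp [hg, hiG]
        have huz : u j i = 0 := by simp only [hu, h0]; ring
        rw [hgz, huz]; ring
    have hl0 := l0_le_card _ _ hsub
    have hcard : (G ∪ (Finset.univ.filter (fun i => u0 j i ≠ 0))).card ≤ m := by
      calc (G ∪ (Finset.univ.filter (fun i => u0 j i ≠ 0))).card
          ≤ G.card + (Finset.univ.filter (fun i => u0 j i ≠ 0)).card :=
            Finset.card_union_le _ _
        _ ≤ G.card + r := by have := hucard j; omega
        _ = m := hm_split
    exact le_trans hl0 hcard
  -- matrix algebra
  set Ag := A.mulVec g with hAg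
  set B := ∑ i, Ag i ^ 2 with hB
  have hmv : ∀ (j : Fin M) (a c : ℝ),
      A.mulVec (fun i => a * g i + c * u j i) = fun i' => a * Ag i' + c * A.mulVec (u j) i' := by
    intro j a c
    have : (fun i => a * g i + c * u j i) = a • g + c • u j := by
      funext i; simp [Pi.add_apply, Pi.smul_apply, smul_eq_mul]
    rw [this, Matrix.mulVec_add, Matrix.mulVec_smul, Matrix.mulVec_smul]
    funext i'
    simp [Pi.add_apply, Pi.smul_apply, smul_eq_mul, hAg]
  have hAtl : ∀ i', ∑ j, lam j * (A.mulVec (u j) i') = - Ag i' := by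
    intro i'
    have e1 : ∀ j : Fin M, A.mulVec (u j) i' = ∑ t, A i' t * u j t := fun j => rfl
    have e2 : ∑ j, lam j * (A.mulVec (u j) i') = ∑ t, A i' t * tl t := by
      rw [Finset.sum_congr rfl (fun j (_ : j ∈ Finset.univ) => by rw [e1 j, Finset.mul_sum])]
      rw [Finset.sum_comm]
      apply Finset.sum_congr rfl
      intro t _
      rw [← hurepl t, Finset.mul_sum]
      exact Finset.sum_congr rfl fun j _ => by ring
    have e3 : ∑ t, A i' t * tl t = A.mulVec tl i' := rfl
    have e4 : A.mulVec tl = - Ag := by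
      have htl_eq : tl = h - g := by
        funext i
        have := hgtl i
        simp only [Pi.sub_apply]
        linarith
      rw [htl_eq, Matrix.mulVec_sub, hnull, hAg]
      simp
    rw [e2, e3, e4]
    simp
  -- RIP inequalities, weighted and summed
  set NU : Fin M → ℝ := fun j => ∑ i, u j i ^ 2 with hNU
  set NA : Fin M → ℝ := fun j => ∑ i, (A.mulVec (u j)) i ^ 2 with hNA
  set IP : Fin M → ℝ := fun j => ∑ i, Ag i * (A.mulVec (u j)) i with hIP
  have hcross : ∀ j, ∑ i, g i * u j i = 0 := by
    intro j
    apply Finset.sum_eq_zero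
    intro i _
    by_cases hi : i ∈ G
    · rw [huG j i hi]; ring
    · have : g i = 0 := by simp [hg, hi]
      rw [this]; ring
  have hineq1 : ∀ j : Fin M, (1 - δ) * (G2 + μ^2 * NU j) ≤ B + 2*μ*(IP j) + μ^2*(NA j) := by
    intro j
    have hsp := hsparse j 1 μ
    have hrip := (hδrip _ hsp).1
    have hlhs : ∑ i, (1 * g i + μ * u j i)^2 = G2 + μ^2 * NU j := by
      simp only [hNU]
      have e0 : ∑ i, (1 * g i + μ * u j i)^2 = ∑ i, (g i + μ * u j i)^2 :=
        Finset.sum_congr rfl fun i _ => by ring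
      rw [e0, sum_expand1 g (u j) μ, hcross j, hgsum]
      ring
    have hrhs : ∑ i, (A.mulVec (fun i => 1 * g i + μ * u j i) i)^2
        = B + 2*μ*(IP j) + μ^2*(NA j) := by
      rw [hmv j 1 μ]
      simp only [hIP, hNA]
      have e : ∑ i, (1 * Ag i + μ * A.mulVec (u j) i)^2
          = ∑ i, (Ag i + μ * A.mulVec (u j) i)^2 :=
        Finset.sum_congr rfl fun i _ => by ring
      rw [e, sum_expand1 Ag (A.mulVec (u j)) μ, hB]
    rw [hlhs, hrhs] at hrip
    exact hrip
  have hineq2 : ∀ j : Fin M, μ^2*(NA j) - 2*(μ*ν)*(IP j) + ν^2*B ≤ (1 + δ) * (μ^2 * NU j + ν^2 * G2) := by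
    intro j
    have hsp := hsparse j (-ν) μ
    have hrip := (hδrip _ hsp).2
    have hlhs : ∑ i, ((-ν) * g i + μ * u j i)^2 = μ^2 * NU j + ν^2 * G2 := by
      simp only [hNU]
      have e : ∑ i, ((-ν) * g i + μ * u j i)^2 = ∑ i, (μ * u j i - ν * g i)^2 :=
        Finset.sum_congr rfl fun i _ => by ring
      rw [e, sum_expand2 g (u j) ν μ, hcross j, hgsum]
      ring
    have hrhs : ∑ i, (A.mulVec (fun i => (-ν) * g i + μ * u j i) i)^2
        = μ^2*(NA j) - 2*(μ*ν)*(IP j) + ν^2*B := by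
      rw [hmv j (-ν) μ]
      simp only [hIP, hNA]
      have e : ∑ i, ((-ν) * Ag i + μ * A.mulVec (u j) i)^2
          = ∑ i, (μ * A.mulVec (u j) i - ν * Ag i)^2 :=
        Finset.sum_congr rfl fun i _ => by ring
      rw [e, sum_expand2 Ag (A.mulVec (u j)) ν μ, hB]
    rw [hlhs, hrhs] at hrip
    exact hrip
  -- sum the inequalities with weights lam
  set SA := ∑ j, lam j * NA j with hSA
  have hSNU : S = ∑ j, lam j * NU j := by
    rw [hSdef]
    try simp only [hNU]
  have hIPS : ∑ j, lam j * IP j = - B := by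
    have e1 : ∑ j, lam j * IP j = ∑ j, ∑ i, lam j * (Ag i * (A.mulVec (u j)) i) := by
      apply Finset.sum_congr rfl
      intro j _
      simp only [hIP]
      rw [Finset.mul_sum]
    rw [e1, Finset.sum_comm]
    have e2 : ∀ i, ∑ j, lam j * (Ag i * (A.mulVec (u j)) i)
        = Ag i * ∑ j, lam j * (A.mulVec (u j)) i := by
      intro i
      rw [Finset.mul_sum]
      exact Finset.sum_congr rfl fun j _ => by ring
    have e3 : ∑ i, ∑ j, lam j * (Ag i * (A.mulVec (u j)) i) = ∑ i, -(Ag i ^ 2) := by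
      apply Finset.sum_congr rfl
      intro i _
      rw [e2 i, hAtl i]
      ring
    rw [e3, hB, ← Finset.sum_neg_distrib]
  have hws1 : (1 - δ) * (G2 + μ^2 * S) ≤ B + 2*μ*(-B) + μ^2*SA := by
    have hsum1 : ∑ j, lam j * ((1 - δ) * (G2 + μ^2 * NU j))
        ≤ ∑ j, lam j * (B + 2*μ*(IP j) + μ^2*(NA j)) :=
      Finset.sum_le_sum fun j _ => mul_le_mul_of_nonneg_left (hineq1 j) (hlnn j)
    have hL : ∑ j, lam j * ((1 - δ) * (G2 + μ^2 * NU j)) = (1-δ)*(G2 + μ^2*S) := by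
      calc ∑ j, lam j * ((1 - δ) * (G2 + μ^2 * NU j))
          = ∑ j, ((1-δ)*G2*lam j + (1-δ)*μ^2*(lam j * NU j)) :=
            Finset.sum_congr rfl fun j _ => by ring
        _ = (1-δ)*G2*(∑ j, lam j) + (1-δ)*μ^2*(∑ j, lam j * NU j) := by
            rw [Finset.sum_add_distrib, ← Finset.mul_sum, ← Finset.mul_sum]
        _ = (1-δ)*(G2 + μ^2*S) := by rw [hlsum, ← hSNU]; ring
    have hR : ∑ j, lam j * (B + 2*μ*(IP j) + μ^2*(NA j)) = B + 2*μ*(-B) + μ^2*SA := by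
      calc ∑ j, lam j * (B + 2*μ*(IP j) + μ^2*(NA j))
          = ∑ j, (B * lam j + 2*μ*(lam j * IP j) + μ^2*(lam j * NA j)) :=
            Finset.sum_congr rfl fun j _ => by ring
        _ = B * (∑ j, lam j) + 2*μ*(∑ j, lam j * IP j) + μ^2*(∑ j, lam j * NA j) := by
            rw [Finset.sum_add_distrib, Finset.sum_add_distrib,
              ← Finset.mul_sum, ← Finset.mul_sum, ← Finset.mul_sum]
        _ = B + 2*μ*(-B) + μ^2*SA := by rw [hlsum, hIPS, ← hSA]; ring
    rw [hL, hR] at hsum1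
    exact hsum1
  have hws2 : μ^2*SA - 2*(μ*ν)*(-B) + ν^2*B ≤ (1 + δ) * (μ^2 * S + ν^2 * G2) := by
    have hsum2 : ∑ j, lam j * (μ^2*(NA j) - 2*(μ*ν)*(IP j) + ν^2*B)
        ≤ ∑ j, lam j * ((1 + δ) * (μ^2 * NU j + ν^2 * G2)) :=
      Finset.sum_le_sum fun j _ => mul_le_mul_of_nonneg_left (hineq2 j) (hlnn j)
    have hL : ∑ j, lam j * (μ^2*(NA j) - 2*(μ*ν)*(IP j) + ν^2*B)
        = μ^2*SA - 2*(μ*ν)*(-B) + ν^2*B := by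
      calc ∑ j, lam j * (μ^2*(NA j) - 2*(μ*ν)*(IP j) + ν^2*B)
          = ∑ j, (μ^2*(lam j * NA j) - 2*(μ*ν)*(lam j * IP j) + ν^2*B*lam j) :=
            Finset.sum_congr rfl fun j _ => by ring
        _ = μ^2*(∑ j, lam j * NA j) - 2*(μ*ν)*(∑ j, lam j * IP j)
              + ν^2*B*(∑ j, lam j) := by
            rw [Finset.sum_add_distrib, Finset.sum_sub_distrib,
              ← Finset.mul_sum, ← Finset.mul_sum, ← Finset.mul_sum]
        _ = μ^2*SA - 2*(μ*ν)*(-B) + ν^2*B := by rw [hlsum, hIPS, ← hSA]; ring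
    have hR : ∑ j, lam j * ((1 + δ) * (μ^2 * NU j + ν^2 * G2))
        = (1 + δ) * (μ^2 * S + ν^2 * G2) := by
      calc ∑ j, lam j * ((1 + δ) * (μ^2 * NU j + ν^2 * G2))
          = ∑ j, ((1+δ)*μ^2*(lam j * NU j) + (1+δ)*ν^2*G2*lam j) :=
            Finset.sum_congr rfl fun j _ => by ring
        _ = (1+δ)*μ^2*(∑ j, lam j * NU j) + (1+δ)*ν^2*G2*(∑ j, lam j) := by
            rw [Finset.sum_add_distrib, ← Finset.mul_sum, ← Finset.mul_sum]
        _ = (1 + δ) * (μ^2 * S + ν^2 * G2) := by rw [hlsum, ← hSNU]; ring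
    rw [hL, hR] at hsum2
    exact hsum2
  have hPQ : (1 - δ) * (G2 + μ^2 * S) ≤ (1 + δ) * (μ^2 * S + ν^2 * G2) := by
    have hid : B + 2*μ*(-B) + μ^2*SA = μ^2*SA - 2*(μ*ν)*(-B) + ν^2*B := by
      rw [hν]; ring
    linarith only [hws1, hws2, hid]
  have hstep : (1 - ν^2) * G2 ≤ δ * ((1 + ν^2) * G2 + 2*μ^2*S) := by linarith only [hPQ]
  have hstep2 : δ * (2*μ^2*S) ≤ δ * (2*μ^2*(c2*G2)) := by
    apply mul_le_mul_of_nonneg_left _ hδ0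
    have hh := mul_le_mul_of_nonneg_left hSc2 (by positivity : (0:ℝ) ≤ 2*μ^2)
    linarith only [hh]
  have hkey2 : δ * ((1 + ν^2 + 2*μ^2*c2) * G2) = δ * (dd * ((1 - ν^2) * G2)) := by
    rw [hkey]
    ring
  have hνsq : 0 < 1 - ν^2 := by
    have hmm := mul_le_mul_of_nonneg_left hν1.le hν0
    have hp2 : ν ^ 2 = ν * ν := sq ν ▸ rfl
    linarith only [hmm, hp2, hν1]
  have hX : 0 < (1 - ν^2) * G2 := mul_pos hνsq hG2pos
  have hlast : (1 - ν^2) * G2 ≤ (δ * dd) * ((1 - ν^2) * G2) := by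
    linarith only [hstep, hstep2, hkey2]
  linarith only [hlast, mul_lt_mul_of_pos_right hδdd hX]
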